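/- Let X be the colored random graph on n vertices with color law μ and symmetric connection probabilities p_n satisfying n·p_n(a,b) → C(a,b) for a symmetric C : 𝒳×𝒳 → [0,∞). Then the family of laws of (L¹,L²) is exponentially tight on M(𝒳) × M̃_*(𝒳×𝒳) (with the Euclidean topology): for every θ > 0 there exists a compact set K_θ ⊂ M(𝒳) × M̃_*(𝒳×𝒳) such that limsup_{n→∞} (1/n) log P( (L¹,L²) ∉ K_θ ) ≤ −θ. In particular, for every θ > 0 there exists N ∈ ℕ with limsup_{n→∞} (1/n) log P( |E| > nN ) ≤ −θ, where |E| is the number of edges of X. -/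

import Mathlib

open Filter Topology

namespace ColoredLDP

noncomputable section

/-- Extended logarithm: `⊥` at nonpositive arguments. -/
def elog (x : ℝ) : EReal := if x ≤ 0 then (⊥ : EReal) else ((Real.log x : ℝ) : EReal)

open Classical in
/-- Relative entropy of finite measures on a finite set, with value `⊤` if
absolute continuity fails. -/
def relEntFin {Y : Type} [Fintype Y] (ν ρ : Y → ℝ) : EReal :=
  if ∀ y, ρ y = 0 → ν y = 0 then (((∑ y, ν y * Real.log (ν y / ρ y)) : ℝ) : EReal)
  else (⊤ : EReal)

open Classical in
/-- Relative entropy of measures on a countable set, with value `⊤` if absolute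
continuity fails or the defining series is not (absolutely) summable. -/
def relEntC {Y : Type} (ν ρ : Y → ℝ) : EReal :=
  if (∀ y, ρ y = 0 → ν y = 0) ∧ Summable (fun y => ν y * Real.log (ν y / ρ y)) then
    (((∑' y, ν y * Real.log (ν y / ρ y)) : ℝ) : EReal)
  else (⊤ : EReal)

variable {𝒳 : Type} [Fintype 𝒳] [DecidableEq 𝒳]

/-- `𝔥_C(ϖ‖ω) = H(ϖ‖Cω⊗ω) + ‖Cω⊗ω‖ − ‖ϖ‖`. -/
def hC (C : 𝒳 → 𝒳 → ℝ) (ϖ : 𝒳 → 𝒳 → ℝ) (ω : 𝒳 → ℝ) : EReal :=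
  relEntFin (fun q : 𝒳 × 𝒳 => ϖ q.1 q.2) (fun q : 𝒳 × 𝒳 => C q.1 q.2 * ω q.1 * ω q.2)
    + (((∑ a, ∑ b, C a b * ω a * ω b) : ℝ) : EReal) - (((∑ a, ∑ b, ϖ a b) : ℝ) : EReal)

/-- A probability mass function. -/
def IsPMF {Y : Type} (ν : Y → ℝ) : Prop := (∀ y, 0 ≤ ν y) ∧ HasSum ν 1

/-- The `𝒳`-marginal `ν₁` of a measure on `𝒳 × ℕ^𝒳`. -/
def marg (ν : 𝒳 × (𝒳 → ℕ) → ℝ) (a : 𝒳) : ℝ := ∑' ℓ : 𝒳 → ℕ, ν (a, ℓ)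

/-- The measure `⟨ν(·,ℓ), ℓ(·)⟩`, the second component of `Φ(ν)`. -/
def pairOf (ν : 𝒳 × (𝒳 → ℕ) → ℝ) (a b : 𝒳) : ℝ := ∑' ℓ : 𝒳 → ℕ, ν (a, ℓ) * (ℓ b : ℝ)

/-- Sub-consistency of a pair `(ϖ, ν)`. -/
def SubConsistent (ϖ : 𝒳 → 𝒳 → ℝ) (ν : 𝒳 × (𝒳 → ℕ) → ℝ) : Prop :=
  ∀ a b : 𝒳, (∑' ℓ : 𝒳 → ℕ, ENNReal.ofReal (ν (a, ℓ) * (ℓ b : ℝ))) ≤ ENNReal.ofReal (ϖ a b)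

/-- The measure with colour law `ω` under which the neighbourhood counts are independent
Poisson variables with means `ϖ(a,b)/ω(a)`; `Q[ϖ,ν]` is `Qof ϖ ν₁`. -/
def Qof (ϖ : 𝒳 → 𝒳 → ℝ) (ω : 𝒳 → ℝ) (x : 𝒳 × (𝒳 → ℕ)) : ℝ :=
  ω x.1 * ∏ b : 𝒳,
    Real.exp (-(ϖ x.1 b / ω x.1)) * (ϖ x.1 b / ω x.1) ^ (x.2 b) / (Nat.factorial (x.2 b) : ℝ)

/-- The set of possible (ordered) edges on `n` vertices. -/
abbrev Edge (n : ℕ) := {e : Fin n × Fin n // e.1 < e.2}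

/-- A coloured graph on `n` vertices: a colouring together with an edge set. -/
abbrev Config (𝒳 : Type) (n : ℕ) := (Fin n → 𝒳) × Finset (Edge n)

/-- The probability weight of a configuration under the coloured random graph law. -/
def wt {n : ℕ} (μ : 𝒳 → ℝ) (p : 𝒳 → 𝒳 → ℝ) (x : Config 𝒳 n) : ℝ :=
  (∏ v, μ (x.1 v)) *
    ∏ e : Edge n,
      if e ∈ x.2 then p (x.1 e.1.1) (x.1 e.1.2) else 1 - p (x.1 e.1.1) (x.1 e.1.2)

/-- The law of the coloured random graph, evaluated on an event. -/
def graphP (𝒳 : Type) [Fintype 𝒳] [DecidableEq 𝒳] (n : ℕ) (μ : 𝒳 → ℝ) (p : 𝒳 → 𝒳 → ℝ)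
    (A : Set (Config 𝒳 n)) : ℝ :=
  ∑ x : Config 𝒳 n, A.indicator (wt μ p) x

/-- Conditional probability for the coloured random graph. -/
def condP (𝒳 : Type) [Fintype 𝒳] [DecidableEq 𝒳] (n : ℕ) (μ : 𝒳 → ℝ) (p : 𝒳 → 𝒳 → ℝ)
    (A B : Set (Config 𝒳 n)) : ℝ :=
  graphP 𝒳 n μ p (A ∩ B) / graphP 𝒳 n μ p B

/-- Conditional expectation for the coloured random graph. -/
def condE (𝒳 : Type) [Fintype 𝒳] [DecidableEq 𝒳] (n : ℕ) (μ : 𝒳 → ℝ) (p : 𝒳 → 𝒳 → ℝ)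
    (f : Config 𝒳 n → ℝ) (B : Set (Config 𝒳 n)) : ℝ :=
  (∑ x : Config 𝒳 n, B.indicator (fun x => wt μ p x * f x) x) / graphP 𝒳 n μ p B

/-- The empirical colour measure `L¹`. -/
def empColor {n : ℕ} (x : Config 𝒳 n) (a : 𝒳) : ℝ :=
  ((Finset.univ.filter (fun v : Fin n => x.1 v = a)).card : ℝ) / n

/-- The empirical pair measure `L²`. -/
def empPair {n : ℕ} (x : Config 𝒳 n) (a b : 𝒳) : ℝ :=
  (∑ e ∈ x.2, ((if x.1 e.1.1 = a ∧ x.1 e.1.2 = b then (1:ℝ) else 0) +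
    (if x.1 e.1.2 = a ∧ x.1 e.1.1 = b then (1:ℝ) else 0))) / n

/-- The number of neighbours of `v` of colour `b`. -/
def locDeg {n : ℕ} (x : Config 𝒳 n) (v : Fin n) (b : 𝒳) : ℕ :=
  (x.2.filter (fun e => (e.1.1 = v ∧ x.1 e.1.2 = b) ∨ (e.1.2 = v ∧ x.1 e.1.1 = b))).card

/-- The empirical neighbourhood measure `M`. -/
def empNbhd {n : ℕ} (x : Config 𝒳 n) (y : 𝒳 × (𝒳 → ℕ)) : ℝ :=
  ((Finset.univ.filter (fun v : Fin n =>
      x.1 v = y.1 ∧ (fun b => locDeg x v b) = y.2)).card : ℝ) / n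

/-- Total variation distance between measures on `𝒳 × ℕ^𝒳`. -/
def dTV (ν ν' : 𝒳 × (𝒳 → ℕ) → ℝ) : ℝ := (1 / 2) * ∑' y, |ν y - ν' y|

end
end ColoredLDP

namespace ColoredLDP

open Finset

variable {𝒳 : Type} [Fintype 𝒳] [DecidableEq 𝒳]

lemma wt_nonneg {n : ℕ} (μ : 𝒳 → ℝ) (p : 𝒳 → 𝒳 → ℝ) (hμ0 : ∀ a, 0 ≤ μ a)
    (hp0 : ∀ a b, 0 ≤ p a b) (hp1 : ∀ a b, p a b ≤ 1) (x : Config 𝒳 n) : 0 ≤ wt μ p x := by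
  refine mul_nonneg (Finset.prod_nonneg fun v _ => hμ0 _)
    (Finset.prod_nonneg fun e _ => ?_)
  split
  · exact hp0 _ _
  · linarith [hp1 (x.1 e.1.1) (x.1 e.1.2)]

lemma graphP_nonneg {n : ℕ} (μ : 𝒳 → ℝ) (p : 𝒳 → 𝒳 → ℝ) (hμ0 : ∀ a, 0 ≤ μ a)
    (hp0 : ∀ a b, 0 ≤ p a b) (hp1 : ∀ a b, p a b ≤ 1) (A : Set (Config 𝒳 n)) :
    0 ≤ graphP 𝒳 n μ p A :=
  Finset.sum_nonneg fun x _ =>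
    Set.indicator_nonneg (fun y _ => wt_nonneg μ p hμ0 hp0 hp1 y) x

lemma graphP_mono {n : ℕ} (μ : 𝒳 → ℝ) (p : 𝒳 → 𝒳 → ℝ) (hμ0 : ∀ a, 0 ≤ μ a)
    (hp0 : ∀ a b, 0 ≤ p a b) (hp1 : ∀ a b, p a b ≤ 1) {A B : Set (Config 𝒳 n)}
    (hAB : A ⊆ B) : graphP 𝒳 n μ p A ≤ graphP 𝒳 n μ p B :=
  Finset.sum_le_sum fun x _ =>
    Set.indicator_le_indicator_of_subset hAB (fun y => wt_nonneg μ p hμ0 hp0 hp1 y) x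

lemma sum_wt_two_pow {n : ℕ} (μ : 𝒳 → ℝ) (p : 𝒳 → 𝒳 → ℝ) :
    ∑ x : Config 𝒳 n, wt μ p x * 2 ^ x.2.card
      = ∑ σ : Fin n → 𝒳, (∏ v, μ (σ v)) * ∏ e : Edge n, (1 + p (σ e.1.1) (σ e.1.2)) := by
  rw [Fintype.sum_prod_type]
  refine Finset.sum_congr rfl fun σ _ => ?_
  have h1 : ∀ E : Finset (Edge n), wt μ p (σ, E) * 2 ^ E.card
      = (∏ v, μ (σ v)) * ((∏ e ∈ E, 2 * p (σ e.1.1) (σ e.1.2)) *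
          ∏ e ∈ Eᶜ, (1 - p (σ e.1.1) (σ e.1.2))) := by
    intro E
    have hsplit : (∏ e : Edge n,
          if e ∈ E then p (σ e.1.1) (σ e.1.2) else 1 - p (σ e.1.1) (σ e.1.2))
        = (∏ e ∈ E, p (σ e.1.1) (σ e.1.2)) * ∏ e ∈ Eᶜ, (1 - p (σ e.1.1) (σ e.1.2)) := by
      rw [Finset.prod_ite]
      congr 1
      · apply Finset.prod_congr _ fun e _ => rfl
        ext e; simp
      · apply Finset.prod_congr _ fun e _ => rfl
        ext e; simp
    have h2 : (2 : ℝ) ^ E.card = ∏ _e ∈ E, (2 : ℝ) := by rw [Finset.prod_const]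
    show (∏ v, μ (σ v)) * (∏ e : Edge n,
        if e ∈ E then p (σ e.1.1) (σ e.1.2) else 1 - p (σ e.1.1) (σ e.1.2)) * 2 ^ E.card = _
    rw [hsplit, h2, Finset.prod_mul_distrib]
    ring
  rw [Finset.sum_congr rfl fun E _ => h1 E, ← Finset.mul_sum]
  congr 1
  rw [← Fintype.prod_add]
  exact Finset.prod_congr rfl fun e _ => by ring

lemma sum_prod_pmf (n : ℕ) (μ : 𝒳 → ℝ) (hμ1 : ∑ a, μ a = 1) :
    ∑ σ : Fin n → 𝒳, ∏ v, μ (σ v) = 1 := by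
  rw [← Fintype.sum_pow, hμ1, one_pow]

lemma chernoff {n : ℕ} (hn : 1 ≤ n) (N : ℕ) (μ : 𝒳 → ℝ)
    (hμ0 : ∀ a, 0 ≤ μ a) (hμ1 : ∑ a, μ a = 1)
    (p : 𝒳 → 𝒳 → ℝ) (hp0 : ∀ a b, 0 ≤ p a b) (hp1 : ∀ a b, p a b ≤ 1)
    (c : ℝ) (hc0 : 0 ≤ c) (hc : ∀ a b, (n : ℝ) * p a b ≤ c) :
    graphP 𝒳 n μ p {x | (n : ℝ) * (N : ℝ) < (x.2.card : ℝ)}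
      ≤ Real.exp ((n : ℝ) * (c - (N : ℝ) * Real.log 2)) := by
  have hn0 : (0:ℝ) < n := by exact_mod_cast hn
  -- step 1: pointwise bound
  have step1 : graphP 𝒳 n μ p {x | (n : ℝ) * (N : ℝ) < (x.2.card : ℝ)}
      ≤ (2:ℝ)⁻¹ ^ (n * N) * ∑ x : Config 𝒳 n, wt μ p x * 2 ^ x.2.card := by
    rw [Finset.mul_sum]
    refine Finset.sum_le_sum fun x _ => ?_
    by_cases hx : x ∈ {x : Config 𝒳 n | (n : ℝ) * (N : ℝ) < (x.2.card : ℝ)}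
    · rw [Set.indicator_of_mem hx]
      have hcard : n * N ≤ x.2.card := by
        have : ((n * N : ℕ) : ℝ) < (x.2.card : ℝ) := by push_cast; exact hx
        exact_mod_cast this.le
      have hw := wt_nonneg μ p hμ0 hp0 hp1 x
      have h2 : (2:ℝ) ^ (n*N) ≤ 2 ^ x.2.card := pow_le_pow_right₀ (by norm_num) hcard
      calc wt μ p x = (2:ℝ)⁻¹ ^ (n*N) * (wt μ p x * 2 ^ (n*N)) := by
            rw [mul_comm ((2:ℝ)⁻¹ ^ (n*N)), mul_assoc, ← mul_pow]; norm_num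
        _ ≤ (2:ℝ)⁻¹ ^ (n*N) * (wt μ p x * 2 ^ x.2.card) := by
            apply mul_le_mul_of_nonneg_left (mul_le_mul_of_nonneg_left h2 hw)
            positivity
    · rw [Set.indicator_of_notMem hx]
      have hw := wt_nonneg μ p hμ0 hp0 hp1 x
      positivity
  -- step 2: compute the generating function
  have step2 : ∑ x : Config 𝒳 n, wt μ p x * 2 ^ x.2.card ≤ Real.exp ((n:ℝ) * c) := by
    rw [sum_wt_two_pow]
    have hbound : ∀ σ : Fin n → 𝒳,
        (∏ e : Edge n, (1 + p (σ e.1.1) (σ e.1.2))) ≤ Real.exp ((n:ℝ) * c) := by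
      intro σ
      have h1 : (∏ e : Edge n, (1 + p (σ e.1.1) (σ e.1.2)))
          ≤ ∏ e : Edge n, Real.exp (p (σ e.1.1) (σ e.1.2)) := by
        apply Finset.prod_le_prod (fun e _ => by linarith [hp0 (σ e.1.1) (σ e.1.2)])
        intro e _
        have := Real.add_one_le_exp (p (σ e.1.1) (σ e.1.2))
        linarith
      rw [← Real.exp_sum] at h1
      refine h1.trans (Real.exp_le_exp.mpr ?_)
      have h2 : ∑ e : Edge n, p (σ e.1.1) (σ e.1.2)
          ≤ (Fintype.card (Edge n) : ℝ) * (c / n) := by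
        calc ∑ e : Edge n, p (σ e.1.1) (σ e.1.2) ≤ ∑ _e : Edge n, c / n :=
              Finset.sum_le_sum fun e _ => by
                rw [le_div_iff₀ hn0, mul_comm]; exact hc _ _
          _ = (Fintype.card (Edge n) : ℝ) * (c / n) := by
              rw [Finset.sum_const, Finset.card_univ, nsmul_eq_mul]
      refine h2.trans ?_
      have hcard : (Fintype.card (Edge n) : ℝ) ≤ (n:ℝ) * n := by
        have h3 : Fintype.card (Edge n) ≤ Fintype.card (Fin n × Fin n) :=
          Fintype.card_subtype_le _
        rw [Fintype.card_prod, Fintype.card_fin] at h3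
        exact_mod_cast h3
      calc (Fintype.card (Edge n) : ℝ) * (c / n) ≤ (n:ℝ) * n * (c / n) :=
            mul_le_mul_of_nonneg_right hcard (by positivity)
        _ = (n:ℝ) * c := by field_simp
    calc ∑ σ : Fin n → 𝒳, (∏ v, μ (σ v)) * ∏ e : Edge n, (1 + p (σ e.1.1) (σ e.1.2))
        ≤ ∑ σ : Fin n → 𝒳, (∏ v, μ (σ v)) * Real.exp ((n:ℝ) * c) := by
          apply Finset.sum_le_sum fun σ _ =>
            mul_le_mul_of_nonneg_left (hbound σ) (Finset.prod_nonneg fun v _ => hμ0 _)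
      _ = Real.exp ((n:ℝ) * c) := by
          rw [← Finset.sum_mul, sum_prod_pmf n μ hμ1, one_mul]
  -- combine
  have hfinal : (2:ℝ)⁻¹ ^ (n*N) * Real.exp ((n:ℝ)*c)
      = Real.exp ((n : ℝ) * (c - (N : ℝ) * Real.log 2)) := by
    have h4 : (2:ℝ)⁻¹ ^ (n*N) = Real.exp (-(((n*N : ℕ)) : ℝ) * Real.log 2) := by
      rw [neg_mul, Real.exp_neg, Real.exp_nat_mul, Real.exp_log (by norm_num : (0:ℝ) < 2),
        inv_pow]
    rw [h4, ← Real.exp_add]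
    congr 1
    push_cast
    ring
  calc graphP 𝒳 n μ p _ ≤ (2:ℝ)⁻¹ ^ (n * N) * ∑ x : Config 𝒳 n, wt μ p x * 2 ^ x.2.card := step1
    _ ≤ (2:ℝ)⁻¹ ^ (n*N) * Real.exp ((n:ℝ)*c) :=
        mul_le_mul_of_nonneg_left step2 (by positivity)
    _ = _ := hfinal

end ColoredLDP
namespace ColoredLDP

open Finset Filter

variable {𝒳 : Type} [Fintype 𝒳] [DecidableEq 𝒳]

lemma elog_le_coe_of_le {x r : ℝ} (h : x ≤ Real.exp r) : elog x ≤ (r : EReal) := by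
  unfold elog
  split
  · exact bot_le
  · next hx =>
    have hx' : (0:ℝ) < x := not_le.mp hx
    have := Real.log_le_log hx' h
    rw [Real.log_exp] at this
    exact_mod_cast this

lemma empColor_nonneg {n : ℕ} (x : Config 𝒳 n) (a : 𝒳) : 0 ≤ empColor x a := by
  unfold empColor; positivity

lemma sum_empColor {n : ℕ} (hn : 0 < n) (x : Config 𝒳 n) : ∑ a, empColor x a = 1 := by
  unfold empColor
  rw [← Finset.sum_div]
  rw [div_eq_one_iff_eq (by exact_mod_cast hn.ne' : ((n:ℝ) ≠ 0))]
  rw [← Nat.cast_sum]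
  congr 1
  rw [← Finset.card_eq_sum_card_fiberwise (f := fun v => x.1 v) (t := univ)
    (fun v _ => mem_univ _)]
  simp

lemma empPair_nonneg {n : ℕ} (x : Config 𝒳 n) (a b : 𝒳) : 0 ≤ empPair x a b := by
  unfold empPair
  apply div_nonneg _ (by positivity)
  apply Finset.sum_nonneg fun e _ => ?_
  have : ∀ (P : Prop) [Decidable P], (0:ℝ) ≤ if P then 1 else 0 := fun P _ => by
    split <;> norm_num
  exact add_nonneg (this _) (this _)

lemma empPair_symm {n : ℕ} (x : Config 𝒳 n) (a b : 𝒳) : empPair x a b = empPair x b a := by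
  unfold empPair
  congr 1
  refine Finset.sum_congr rfl fun e _ => ?_
  rw [add_comm]
  congr 1 <;> exact if_congr and_comm rfl rfl

lemma sum_empPair {n : ℕ} (x : Config 𝒳 n) :
    ∑ a, ∑ b, empPair x a b = 2 * (x.2.card : ℝ) / n := by
  unfold empPair
  simp only [← Finset.sum_div]
  congr 1
  have key : ∀ e ∈ x.2, (∑ a, ∑ b, ((if x.1 e.1.1 = a ∧ x.1 e.1.2 = b then (1:ℝ) else 0) +
      (if x.1 e.1.2 = a ∧ x.1 e.1.1 = b then (1:ℝ) else 0))) = 2 := by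
    intro e _
    simp [Finset.sum_add_distrib, ite_and, Finset.sum_ite_eq]
    norm_num
  calc ∑ a, ∑ b, ∑ e ∈ x.2, ((if x.1 e.1.1 = a ∧ x.1 e.1.2 = b then (1:ℝ) else 0) +
        (if x.1 e.1.2 = a ∧ x.1 e.1.1 = b then (1:ℝ) else 0))
      = ∑ a, ∑ e ∈ x.2, ∑ b, ((if x.1 e.1.1 = a ∧ x.1 e.1.2 = b then (1:ℝ) else 0) +
        (if x.1 e.1.2 = a ∧ x.1 e.1.1 = b then (1:ℝ) else 0)) := by
        exact Finset.sum_congr rfl fun a _ => Finset.sum_comm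
    _ = ∑ e ∈ x.2, ∑ a, ∑ b, ((if x.1 e.1.1 = a ∧ x.1 e.1.2 = b then (1:ℝ) else 0) +
        (if x.1 e.1.2 = a ∧ x.1 e.1.1 = b then (1:ℝ) else 0)) := Finset.sum_comm
    _ = ∑ _e ∈ x.2, (2:ℝ) := Finset.sum_congr rfl key
    _ = 2 * (x.2.card : ℝ) := by rw [Finset.sum_const, nsmul_eq_mul, mul_comm]

end ColoredLDP
namespace ColoredLDP

open Finset Filter

variable {𝒳 : Type} [Fintype 𝒳] [DecidableEq 𝒳]

lemma isCompact_K (N : ℕ) : IsCompact {z : (𝒳 → ℝ) × (𝒳 → 𝒳 → ℝ) |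
    (∀ a, 0 ≤ z.1 a) ∧ (∑ a, z.1 a) = 1 ∧ (∀ a b, 0 ≤ z.2 a b) ∧
    (∀ a b, z.2 a b = z.2 b a) ∧ (∑ a, ∑ b, z.2 a b) ≤ 2 * N} := by
  have hcl : IsClosed {z : (𝒳 → ℝ) × (𝒳 → 𝒳 → ℝ) |
      (∀ a, 0 ≤ z.1 a) ∧ (∑ a, z.1 a) = 1 ∧ (∀ a b, 0 ≤ z.2 a b) ∧
      (∀ a b, z.2 a b = z.2 b a) ∧ (∑ a, ∑ b, z.2 a b) ≤ 2 * N} := by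
    have hrw : {z : (𝒳 → ℝ) × (𝒳 → 𝒳 → ℝ) |
        (∀ a, 0 ≤ z.1 a) ∧ (∑ a, z.1 a) = 1 ∧ (∀ a b, 0 ≤ z.2 a b) ∧
        (∀ a b, z.2 a b = z.2 b a) ∧ (∑ a, ∑ b, z.2 a b) ≤ 2 * N}
        = (⋂ a, {z : (𝒳 → ℝ) × (𝒳 → 𝒳 → ℝ) | 0 ≤ z.1 a}) ∩
          ({z : (𝒳 → ℝ) × (𝒳 → 𝒳 → ℝ) | ∑ a, z.1 a = 1} ∩
          ((⋂ a, ⋂ b, {z : (𝒳 → ℝ) × (𝒳 → 𝒳 → ℝ) | 0 ≤ z.2 a b}) ∩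
          ((⋂ a, ⋂ b, {z : (𝒳 → ℝ) × (𝒳 → 𝒳 → ℝ) | z.2 a b = z.2 b a}) ∩
          {z : (𝒳 → ℝ) × (𝒳 → 𝒳 → ℝ) | ∑ a, ∑ b, z.2 a b ≤ 2 * N}))) := by
      ext z
      simp only [Set.mem_setOf_eq, Set.mem_inter_iff, Set.mem_iInter]
    rw [hrw]
    have c1 : ∀ a : 𝒳, Continuous fun z : (𝒳 → ℝ) × (𝒳 → 𝒳 → ℝ) => z.1 a :=
      fun a => by fun_prop
    have c2 : ∀ a b : 𝒳, Continuous fun z : (𝒳 → ℝ) × (𝒳 → 𝒳 → ℝ) => z.2 a b :=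
      fun a b => by fun_prop
    refine (isClosed_iInter fun a => isClosed_le continuous_const (c1 a)).inter
      ((isClosed_eq (continuous_finset_sum _ fun a _ => c1 a) continuous_const).inter
      ((isClosed_iInter fun a => isClosed_iInter fun b =>
          isClosed_le continuous_const (c2 a b)).inter
      ((isClosed_iInter fun a => isClosed_iInter fun b =>
          isClosed_eq (c2 a b) (c2 b a)).inter
      (isClosed_le (continuous_finset_sum _ fun a _ =>
          continuous_finset_sum _ fun b _ => c2 a b) continuous_const))))
  apply IsCompact.of_isClosed_subset
    (isCompact_Icc (a := ((fun _ => (0:ℝ), fun _ _ => (0:ℝ)) : (𝒳 → ℝ) × (𝒳 → 𝒳 → ℝ)))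
      (b := ((fun _ => (1:ℝ), fun _ _ => (2*(N:ℝ))) : (𝒳 → ℝ) × (𝒳 → 𝒳 → ℝ)))) hcl
  rintro z ⟨h1, h2, h3, h4, h5⟩
  rw [Set.mem_Icc]
  refine ⟨⟨fun a => h1 a, fun a b => h3 a b⟩, ⟨fun a => ?_, fun a b => ?_⟩⟩
  · calc z.1 a ≤ ∑ a', z.1 a' := Finset.single_le_sum (fun a' _ => h1 a') (Finset.mem_univ a)
      _ = 1 := h2
  · calc z.2 a b ≤ ∑ b', z.2 a b' :=
        Finset.single_le_sum (fun b' _ => h3 a b') (Finset.mem_univ b)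
      _ ≤ ∑ a', ∑ b', z.2 a' b' :=
        Finset.single_le_sum (f := fun a' => ∑ b', z.2 a' b')
          (fun a' _ => Finset.sum_nonneg fun b' _ => h3 a' b') (Finset.mem_univ a)
      _ ≤ 2 * N := h5

lemma key_limsup (μ : 𝒳 → ℝ) (hμ0 : ∀ a, 0 ≤ μ a) (hμ1 : ∑ a, μ a = 1)
    (p : ℕ → 𝒳 → 𝒳 → ℝ) (hp0 : ∀ n a b, 0 ≤ p n a b) (hp1 : ∀ n a b, p n a b ≤ 1)
    (c : ℝ) (hc0 : 0 ≤ c)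
    (hev : ∀ᶠ n : ℕ in atTop, ∀ a b, (n:ℝ) * p n a b ≤ c)
    (θ : ℝ) (hθ : 0 < θ) (N : ℕ) (hN : c - (N:ℝ) * Real.log 2 ≤ -θ)
    (A : ∀ n : ℕ, Set (Config 𝒳 n))
    (hA : ∀ n, 1 ≤ n → A n ⊆ {x : Config 𝒳 n | (n:ℝ) * (N:ℝ) < (x.2.card : ℝ)}) :
    limsup (fun n : ℕ => (((n : ℝ)⁻¹ : ℝ) : EReal) * elog (graphP 𝒳 n μ (p n) (A n))) atTop
      ≤ ((-θ : ℝ) : EReal) := by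
  apply Filter.limsup_le_of_le (by isBoundedDefault)
  filter_upwards [hev, eventually_ge_atTop 1] with n hev_n hn1
  have hn0 : (0:ℝ) < n := by exact_mod_cast hn1
  have hb : graphP 𝒳 n μ (p n) (A n) ≤ Real.exp ((n:ℝ) * (-θ)) := by
    calc graphP 𝒳 n μ (p n) (A n)
        ≤ graphP 𝒳 n μ (p n) {x : Config 𝒳 n | (n:ℝ) * (N:ℝ) < (x.2.card : ℝ)} :=
          graphP_mono μ (p n) hμ0 (hp0 n) (hp1 n) (hA n hn1)
      _ ≤ Real.exp ((n:ℝ) * (c - (N:ℝ) * Real.log 2)) :=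
          chernoff hn1 N μ hμ0 hμ1 (p n) (hp0 n) (hp1 n) c hc0 hev_n
      _ ≤ Real.exp ((n:ℝ) * (-θ)) :=
          Real.exp_le_exp.mpr (mul_le_mul_of_nonneg_left hN hn0.le)
  have h1 : elog (graphP 𝒳 n μ (p n) (A n)) ≤ (((n:ℝ) * (-θ) : ℝ) : EReal) :=
    elog_le_coe_of_le hb
  calc (((n : ℝ)⁻¹ : ℝ) : EReal) * elog (graphP 𝒳 n μ (p n) (A n))
      ≤ (((n : ℝ)⁻¹ : ℝ) : EReal) * (((n:ℝ) * (-θ) : ℝ) : EReal) :=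
        mul_le_mul_of_nonneg_left h1 (EReal.coe_nonneg.mpr (inv_nonneg.mpr hn0.le))
    _ = ((-θ : ℝ) : EReal) := by
        rw [← EReal.coe_mul]
        congr 1
        field_simp

end ColoredLDP

namespace ColoredLDP

/-- Lemma 5.1: exponential tightness of the laws of `(L¹, L²)`. -/
theorem exponential_tightness (𝒳 : Type) [Fintype 𝒳] [DecidableEq 𝒳]
    (μ : 𝒳 → ℝ) (hμ0 : ∀ a, 0 ≤ μ a) (hμ1 : ∑ a, μ a = 1)
    (p : ℕ → 𝒳 → 𝒳 → ℝ) (hp0 : ∀ n a b, 0 ≤ p n a b) (hp1 : ∀ n a b, p n a b ≤ 1)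
    (hpsym : ∀ n a b, p n a b = p n b a)
    (C : 𝒳 → 𝒳 → ℝ) (hC0 : ∀ a b, 0 ≤ C a b) (hCsym : ∀ a b, C a b = C b a)
    (hlim : ∀ a b, Tendsto (fun n : ℕ => (n : ℝ) * p n a b) atTop (𝓝 (C a b)))
 :
    (∀ θ : ℝ, 0 < θ → ∃ K : Set ((𝒳 → ℝ) × (𝒳 → 𝒳 → ℝ)), IsCompact K ∧
      (∀ z ∈ K, ((∀ a, 0 ≤ z.1 a) ∧ (∑ a, z.1 a) = 1) ∧
        (∀ a b, 0 ≤ z.2 a b) ∧ (∀ a b, z.2 a b = z.2 b a)) ∧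
      limsup (fun n : ℕ => (((n : ℝ)⁻¹ : ℝ) : EReal) *
          elog (graphP 𝒳 n μ (p n) {x | (empColor x, empPair x) ∉ K})) atTop ≤
        ((-θ : ℝ) : EReal)) ∧
    (∀ θ : ℝ, 0 < θ → ∃ N : ℕ,
      limsup (fun n : ℕ => (((n : ℝ)⁻¹ : ℝ) : EReal) *
          elog (graphP 𝒳 n μ (p n) {x | (n : ℝ) * (N : ℝ) < (x.2.card : ℝ)})) atTop ≤
        ((-θ : ℝ) : EReal)) := by
  classical
  set c : ℝ := ∑ a : 𝒳, ∑ b : 𝒳, (C a b + 1) with hc_def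
  have hc0 : 0 ≤ c :=
    Finset.sum_nonneg fun a _ => Finset.sum_nonneg fun b _ => by linarith [hC0 a b]
  have hcle : ∀ a b, C a b + 1 ≤ c := by
    intro a b
    calc C a b + 1 ≤ ∑ b', (C a b' + 1) :=
          Finset.single_le_sum (f := fun b' => C a b' + 1)
            (fun b' _ => by show 0 ≤ C a b' + 1; linarith [hC0 a b']) (Finset.mem_univ b)
      _ ≤ c :=
          Finset.single_le_sum (f := fun a' => ∑ b', (C a' b' + 1))
            (fun a' _ => Finset.sum_nonneg fun b' _ => by linarith [hC0 a' b']) (Finset.mem_univ a)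
  have hev : ∀ᶠ n : ℕ in atTop, ∀ a b : 𝒳, (n:ℝ) * p n a b ≤ c := by
    rw [Filter.eventually_all]
    intro a
    rw [Filter.eventually_all]
    intro b
    have h := (hlim a b).eventually_le_const (show C a b < C a b + 1 by linarith)
    exact h.mono fun n hn => hn.trans (hcle a b)
  have hNchoice : ∀ θ : ℝ, 0 < θ → ∃ N : ℕ, c - (N:ℝ) * Real.log 2 ≤ -θ := by
    intro θ hθ
    refine ⟨⌈(c + θ) / Real.log 2⌉₊, ?_⟩
    have hlog : (0:ℝ) < Real.log 2 := Real.log_pos (by norm_num)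
    have h1 := Nat.le_ceil ((c + θ) / Real.log 2)
    have h2 : c + θ ≤ (⌈(c + θ) / Real.log 2⌉₊ : ℝ) * Real.log 2 := by
      rw [← div_le_iff₀ hlog]
      exact h1
    linarith
  constructor
  · intro θ hθ
    obtain ⟨N, hN⟩ := hNchoice θ hθ
    refine ⟨{z : (𝒳 → ℝ) × (𝒳 → 𝒳 → ℝ) | (∀ a, 0 ≤ z.1 a) ∧ (∑ a, z.1 a) = 1 ∧
      (∀ a b, 0 ≤ z.2 a b) ∧ (∀ a b, z.2 a b = z.2 b a) ∧ (∑ a, ∑ b, z.2 a b) ≤ 2 * N},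
      isCompact_K N, ?_, ?_⟩
    · rintro z ⟨h1, h2, h3, h4, h5⟩
      exact ⟨⟨h1, h2⟩, h3, h4⟩
    · apply key_limsup μ hμ0 hμ1 p hp0 hp1 c hc0 hev θ hθ N hN
      intro n hn1 x hx
      by_contra hcard
      apply hx
      have hn0 : (0:ℝ) < n := by exact_mod_cast hn1
      refine ⟨fun a => empColor_nonneg x a, sum_empColor hn1 x,
        fun a b => empPair_nonneg x a b, fun a b => empPair_symm x a b, ?_⟩
      rw [sum_empPair, div_le_iff₀ hn0]
      have hc2 : (x.2.card : ℝ) ≤ (n:ℝ) * (N:ℝ) := not_lt.mp (by simpa using hcard)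
      linarith
  · intro θ hθ
    obtain ⟨N, hN⟩ := hNchoice θ hθ
    exact ⟨N, key_limsup μ hμ0 hμ1 p hp0 hp1 c hc0 hev θ hθ N hN
      (fun n => {x : Config 𝒳 n | (n : ℝ) * (N : ℝ) < (x.2.card : ℝ)})
      (fun n _ x hx => hx)⟩

end ColoredLDP
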